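/- For every f ∈ 𝒜, the linear functional φ(f) = ∫ f(0,0,r) dr satisfies φ(f* × f) = φ(f × f*) = ‖f‖₂², the square of the L²-norm of f on ℝⁿ × ℝⁿ × ℝ. In particular φ is a faithful positive trace on (𝒜, ×, *). -/

import Mathlib

open MeasureTheory
noncomputable section

/-- ℝⁿ -/
abbrev Rn (n : ℕ) := Fin n → ℝ

/-- η_λ(r) = (e^{2λr} − 1)/(2λ) -/
def eta (l r : ℝ) : ℝ := (Real.exp (2 * l * r) - 1) / (2 * l)

/-- ē(t) = e^{−2πit} -/
def ebar (t : ℝ) : ℂ := Complex.exp (-2 * Real.pi * t * Complex.I)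

/-- standard inner product β on ℝⁿ -/
def beta {n : ℕ} (x y : Rn n) : ℝ := ∑ i, x i * y i

/-- membership in 𝒜: Schwartz in (x,y,r), compactly supported in r -/
def IsA {n : ℕ} (f : Rn n → Rn n → ℝ → ℂ) : Prop :=
  (∃ F : SchwartzMap ((Rn n × Rn n) × ℝ) ℂ, ∀ x y r, f x y r = F ((x, y), r)) ∧
  (∃ C : ℝ, ∀ x y r, f x y r ≠ 0 → |r| ≤ C)

/-- twisted convolution product -/
def tMul {n : ℕ} (l : ℝ) (f g : Rn n → Rn n → ℝ → ℂ) : Rn n → Rn n → ℝ → ℂ :=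
  fun x y r => ∫ xt : Rn n, ∫ yt : Rn n,
    f xt yt r * g (x - xt) (y - yt) r * ebar (eta l r * beta xt (y - yt))

/-- twisted involution -/
def tStar {n : ℕ} (l : ℝ) (f : Rn n → Rn n → ℝ → ℂ) : Rn n → Rn n → ℝ → ℂ :=
  fun x y r => (starRingEnd ℂ) (f (-x) (-y) r) * ebar (eta l r * beta x y)

/-- φ(f) = ∫ f(0,0,r) dr -/
def PhiF {n : ℕ} (f : Rn n → Rn n → ℝ → ℂ) : ℂ := ∫ r : ℝ, f 0 0 r

/-- continuous with compact support (as a function of all variables) -/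
def CC {n : ℕ} (ξ : Rn n → Rn n → ℝ → ℂ) : Prop :=
  Continuous (fun p : (Rn n × Rn n) × ℝ => ξ p.1.1 p.1.2 p.2) ∧
  HasCompactSupport (fun p : (Rn n × Rn n) × ℝ => ξ p.1.1 p.1.2 p.2)

/-- L² inner product ⟨f,g⟩ (linear in the first variable, conjugate in the second) -/
def ip {n : ℕ} (f g : Rn n → Rn n → ℝ → ℂ) : ℂ :=
  ∫ x : Rn n, ∫ y : Rn n, ∫ r : ℝ, f x y r * (starRingEnd ℂ) (g x y r)

/-- the regular representation L_f ξ (same integral formula as the twisted product) -/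
def Lop {n : ℕ} (l : ℝ) (f ξ : Rn n → Rn n → ℝ → ℂ) : Rn n → Rn n → ℝ → ℂ :=
  tMul l f ξ

/-! ### auxiliary lemmas -/

lemma ebar_add (s t : ℝ) : ebar (s + t) = ebar s * ebar t := by
  unfold ebar; rw [← Complex.exp_add]; congr 1; push_cast; ring

lemma ebar_zero : ebar 0 = 1 := by simp [ebar]

lemma beta_neg_right {n : ℕ} (x y : Rn n) : beta x (-y) = - beta x y := by
  simp [beta, mul_neg]

lemma beta_neg_left {n : ℕ} (x y : Rn n) : beta (-x) y = - beta x y := by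
  simp [beta, neg_mul]

lemma beta_neg_neg {n : ℕ} (x y : Rn n) : beta (-x) (-y) = beta x y := by
  simp [beta]

lemma ebar_mul_ebar_neg (t : ℝ) : ebar t * ebar (-t) = 1 := by
  rw [← ebar_add, add_neg_cancel, ebar_zero]

lemma conj_cancel (a e e' : ℂ) (h : e * e' = 1) :
    a * ((starRingEnd ℂ) a * e) * e' = ((‖a‖ ^ 2 : ℝ) : ℂ) := by
  have h2 : a * ((starRingEnd ℂ) a * e) * e' = a * (starRingEnd ℂ) a * (e * e') := by ring
  rw [h2, h, mul_one, Complex.mul_conj']; norm_cast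

lemma conj_cancel' (a e e' : ℂ) (h : e * e' = 1) :
    (starRingEnd ℂ) a * e * a * e' = ((‖a‖ ^ 2 : ℝ) : ℂ) := by
  have h2 : (starRingEnd ℂ) a * e * a * e' = a * (starRingEnd ℂ) a * (e * e') := by ring
  rw [h2, h, mul_one, Complex.mul_conj']; norm_cast

instance myHaar1 (n : ℕ) : (volume : Measure (Rn n × Rn n)).IsAddHaarMeasure := by
  rw [Measure.volume_eq_prod]; exact Measure.prod.instIsAddHaarMeasure _ _
instance myHaar2 (n : ℕ) : (volume : Measure ((Rn n × Rn n) × ℝ)).IsAddHaarMeasure := by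
  rw [Measure.volume_eq_prod]; exact Measure.prod.instIsAddHaarMeasure _ _

lemma iter_eq_prod {n : ℕ} (G : ((Rn n × Rn n) × ℝ) → ℝ) (hG : Integrable G) :
    (∫ x : Rn n, ∫ y : Rn n, ∫ r : ℝ, G ((x, y), r)) = ∫ z, G z := by
  have hG2 : Integrable G ((volume : Measure (Rn n × Rn n)).prod volume) := by
    rwa [← Measure.volume_eq_prod]
  have h1 : Integrable (fun p : Rn n × Rn n => ∫ r : ℝ, G (p, r))
      ((volume : Measure (Rn n)).prod volume) := by
    rw [← Measure.volume_eq_prod]; exact hG2.integral_prod_left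
  calc ∫ x : Rn n, ∫ y : Rn n, ∫ r : ℝ, G ((x, y), r)
      = ∫ p : Rn n × Rn n, ∫ r : ℝ, G (p, r) := by
        rw [Measure.volume_eq_prod (Rn n) (Rn n), ← integral_prod _ h1]
    _ = ∫ z : (Rn n × Rn n) × ℝ, G z := by
        rw [Measure.volume_eq_prod (Rn n × Rn n) ℝ, ← integral_prod _ hG2]

lemma iter_eq_prod' {n : ℕ} (G : ((Rn n × Rn n) × ℝ) → ℝ) (hG : Integrable G) :
    (∫ r : ℝ, ∫ x : Rn n, ∫ y : Rn n, G ((x, y), r)) = ∫ z, G z := by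
  have hG2 : Integrable G ((volume : Measure (Rn n × Rn n)).prod volume) := by
    rwa [← Measure.volume_eq_prod]
  have hGs : Integrable (G ∘ Prod.swap) ((volume : Measure ℝ).prod volume) := hG2.swap
  have hae : ∀ᵐ r : ℝ, Integrable (fun p : Rn n × Rn n => G (p, r)) volume := hGs.prod_right_ae
  calc ∫ r : ℝ, ∫ x : Rn n, ∫ y : Rn n, G ((x, y), r)
      = ∫ r : ℝ, ∫ p : Rn n × Rn n, G (p, r) := by
        refine integral_congr_ae ?_
        filter_upwards [hae] with r hr
        have hr2 : Integrable (fun p : Rn n × Rn n => G (p, r))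
            ((volume : Measure (Rn n)).prod volume) := by rwa [← Measure.volume_eq_prod]
        rw [Measure.volume_eq_prod (Rn n) (Rn n)]
        exact (integral_prod _ hr2).symm
    _ = ∫ z : ℝ × (Rn n × Rn n), G z.swap ∂((volume : Measure ℝ).prod volume) :=
        (integral_prod _ hGs).symm
    _ = ∫ z : (Rn n × Rn n) × ℝ, G z := by
        rw [Measure.volume_eq_prod (Rn n × Rn n) ℝ]
        exact integral_prod_swap G

/-- substituting (x,y) ↦ (−x,−y) in a double integral -/
lemma neg2 {n : ℕ} (I : Rn n → Rn n → ℂ) :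
    (∫ x : Rn n, ∫ y : Rn n, I x y) = ∫ x : Rn n, ∫ y : Rn n, I (-x) (-y) := by
  rw [← integral_neg_eq_self (fun x => ∫ y : Rn n, I x y) volume]
  exact integral_congr_ae (Filter.Eventually.of_forall fun x =>
    (integral_neg_eq_self (fun y => I (-x) y) volume).symm)

lemma sq_norm_integrable {n : ℕ} (F : SchwartzMap ((Rn n × Rn n) × ℝ) ℂ) :
    Integrable (fun z : (Rn n × Rn n) × ℝ => ‖F z‖ ^ 2) volume := by
  obtain ⟨C, -, hC⟩ := F.decay 0 0
  have hbd : ∀ z, ‖F z‖ ≤ C := fun z => by simpa using hC z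
  have h : Integrable (fun z : (Rn n × Rn n) × ℝ => ‖F z‖ * ‖F z‖) volume :=
    (F.integrable.norm).bdd_mul (c := C) F.continuous.norm.aestronglyMeasurable
      (Filter.Eventually.of_forall fun z => by simpa using hbd z)
  simpa [pow_two] using h

theorem phi_trace {n : ℕ} (l : ℝ) (f : Rn n → Rn n → ℝ → ℂ) (hf : IsA f) :
    PhiF (tMul l (tStar l f) f) =
      ((∫ x : Rn n, ∫ y : Rn n, ∫ r : ℝ, ‖f x y r‖ ^ 2 : ℝ) : ℂ) ∧
    PhiF (tMul l f (tStar l f)) =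
      ((∫ x : Rn n, ∫ y : Rn n, ∫ r : ℝ, ‖f x y r‖ ^ 2 : ℝ) : ℂ) ∧
    (PhiF (tMul l (tStar l f) f) = 0 → f = 0) ∧
    (∀ g : Rn n → Rn n → ℝ → ℂ, IsA g →
      PhiF (tMul l f g) = PhiF (tMul l g f)) := by
  obtain ⟨⟨F, hF⟩, -⟩ := hf
  -- the squared-norm function and its integrability
  set G : ((Rn n × Rn n) × ℝ) → ℝ := fun z => ‖F z‖ ^ 2 with hGdef
  have hGint : Integrable G volume := sq_norm_integrable F
  have hfG : ∀ x y r, (‖f x y r‖ ^ 2 : ℝ) = G ((x, y), r) := fun x y r => by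
    rw [hF]
  -- the swap of the iterated integrals
  have hswap : (∫ r : ℝ, ∫ x : Rn n, ∫ y : Rn n, (‖f x y r‖ ^ 2 : ℝ))
      = ∫ x : Rn n, ∫ y : Rn n, ∫ r : ℝ, (‖f x y r‖ ^ 2 : ℝ) := by
    simp only [hfG]
    rw [iter_eq_prod' G hGint, iter_eq_prod G hGint]
  -- PhiF of f* × f
  have h1 : PhiF (tMul l (tStar l f) f)
      = ∫ r : ℝ, ∫ x : Rn n, ∫ y : Rn n, ((‖f x y r‖ ^ 2 : ℝ) : ℂ) := by
    unfold PhiF tMul tStar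
    refine integral_congr_ae (Filter.Eventually.of_forall fun r => ?_)
    have step : ∀ x y : Rn n,
        (starRingEnd ℂ) (f (-x) (-y) r) * ebar (eta l r * beta x y) * f (0 - x) (0 - y) r *
          ebar (eta l r * beta x (0 - y))
        = ((‖f (-x) (-y) r‖ ^ 2 : ℝ) : ℂ) := by
      intro x y
      simp only [zero_sub]
      rw [beta_neg_right, mul_neg]
      exact conj_cancel' _ _ _ (ebar_mul_ebar_neg _)
    simp only [step]
    rw [neg2 (fun x y => ((‖f x y r‖ ^ 2 : ℝ) : ℂ))]
  -- PhiF of f × f*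
  have h2 : PhiF (tMul l f (tStar l f))
      = ∫ r : ℝ, ∫ x : Rn n, ∫ y : Rn n, ((‖f x y r‖ ^ 2 : ℝ) : ℂ) := by
    unfold PhiF tMul tStar
    refine integral_congr_ae (Filter.Eventually.of_forall fun r => ?_)
    have step : ∀ x y : Rn n,
        f x y r * ((starRingEnd ℂ) (f (-(0 - x)) (-(0 - y)) r) *
          ebar (eta l r * beta (0 - x) (0 - y))) * ebar (eta l r * beta x (0 - y))
        = ((‖f x y r‖ ^ 2 : ℝ) : ℂ) := by
      intro x y
      simp only [zero_sub, neg_neg]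
      rw [beta_neg_neg, beta_neg_right, mul_neg]
      exact conj_cancel _ _ _ (ebar_mul_ebar_neg _)
    simp only [step]
  -- the common value as a real number
  have hcoe : (∫ r : ℝ, ∫ x : Rn n, ∫ y : Rn n, ((‖f x y r‖ ^ 2 : ℝ) : ℂ))
      = ((∫ x : Rn n, ∫ y : Rn n, ∫ r : ℝ, ‖f x y r‖ ^ 2 : ℝ) : ℂ) := by
    have e1 : ∀ (r : ℝ) (x : Rn n), (∫ y : Rn n, ((‖f x y r‖ ^ 2 : ℝ) : ℂ))
        = (((∫ y : Rn n, ‖f x y r‖ ^ 2 : ℝ)) : ℂ) := fun r x => integral_ofReal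
    have e2 : ∀ (r : ℝ), (∫ x : Rn n, (((∫ y : Rn n, ‖f x y r‖ ^ 2 : ℝ)) : ℂ))
        = (((∫ x : Rn n, ∫ y : Rn n, ‖f x y r‖ ^ 2 : ℝ)) : ℂ) := fun r => integral_ofReal
    have e3 : (∫ r : ℝ, (((∫ x : Rn n, ∫ y : Rn n, ‖f x y r‖ ^ 2 : ℝ)) : ℂ))
        = (((∫ r : ℝ, ∫ x : Rn n, ∫ y : Rn n, ‖f x y r‖ ^ 2 : ℝ)) : ℂ) := integral_ofReal
    rw [show (∫ r : ℝ, ∫ x : Rn n, ∫ y : Rn n, ((‖f x y r‖ ^ 2 : ℝ) : ℂ))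
        = ∫ r : ℝ, (((∫ x : Rn n, ∫ y : Rn n, ‖f x y r‖ ^ 2 : ℝ)) : ℂ) from by
      simp only [e1, e2], e3]
    exact congrArg Complex.ofReal hswap
  refine ⟨h1.trans hcoe, h2.trans hcoe, ?_, ?_⟩
  · -- faithfulness
    intro h0
    rw [h1.trans hcoe] at h0
    have hreal : (∫ x : Rn n, ∫ y : Rn n, ∫ r : ℝ, ‖f x y r‖ ^ 2 : ℝ) = 0 := by
      exact_mod_cast h0
    have hzero : (∫ z, G z) = 0 := by
      rw [← iter_eq_prod G hGint]
      simpa only [hfG] using hreal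
    have hae0 : G =ᵐ[volume] 0 :=
      (integral_eq_zero_iff_of_nonneg (fun z => sq_nonneg _) hGint).mp hzero
    have hcont : Continuous G := F.continuous.norm.pow 2
    have hG0 : G = 0 := (Continuous.ae_eq_iff_eq volume hcont continuous_const).mp hae0
    funext x y r
    have : G ((x, y), r) = 0 := congrFun hG0 ((x, y), r)
    have : ‖f x y r‖ ^ 2 = 0 := by rw [hfG]; exact this
    have hnorm : ‖f x y r‖ = 0 := by
      have := pow_eq_zero_iff (n := 2) (by norm_num) |>.mp this
      exact this
    simpa using norm_eq_zero.mp hnorm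
  · -- trace property
    intro g hg
    unfold PhiF tMul
    refine integral_congr_ae (Filter.Eventually.of_forall fun r => ?_)
    calc (∫ x : Rn n, ∫ y : Rn n,
            f x y r * g (0 - x) (0 - y) r * ebar (eta l r * beta x (0 - y)))
        = ∫ x : Rn n, ∫ y : Rn n,
            f (-x) (-y) r * g (0 - -x) (0 - -y) r * ebar (eta l r * beta (-x) (0 - -y)) :=
          neg2 _
      _ = ∫ x : Rn n, ∫ y : Rn n,
            g x y r * f (0 - x) (0 - y) r * ebar (eta l r * beta x (0 - y)) := by
          refine integral_congr_ae (Filter.Eventually.of_forall fun x => ?_)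
          refine integral_congr_ae (Filter.Eventually.of_forall fun y => ?_)
          simp only [zero_sub, neg_neg]
          rw [beta_neg_left, beta_neg_right]
          ring
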